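/- Fix k ≥ 2 and let σ̂ = (σ̂^{ij})_{1≤i,j≤4} be a co-admissible family, not all of whose members are zero, such that σ̂^{ij} = 0 whenever both i ≥ 3 and j ≥ 3. Then there exist column vectors B¹, B², B³, B⁴ ∈ ℂ^k, a vector f = (f₁,…,f₄) ∈ ℂ⁴ and a vector b ∈ ℂ^k such that Σ_{j=1}^{4} σ̂^{ij} B^j = f_i b for every i ∈ {1,2,3,4}, and f_i b ≠ 0 for at least one i. -/
import Mathlib


open Matrix

/-- A family `σ̂ = (σ̂^{ij})_{1≤i,j≤4}` of complex `k×k` matrices is *co-admissible* if each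
`σ̂ i j` is skew-symmetric and `σ̂ i j = σ̂ j i`.  Such families encode, in the standard
bases, the elements `S = Σ σ̂^{ij}_{lp} f_i f_j ⊗ b_l ∧ b_p` of `S²ℂ⁴ ⊗ Λ²ℂ^k`. -/
def CoAdmissible (k : ℕ) (σh : Fin 4 → Fin 4 → Matrix (Fin k) (Fin k) ℂ) : Prop :=
  (∀ i j, (σh i j)ᵀ = -σh i j) ∧ (∀ i j, σh i j = σh j i)

section Aux

variable {k : ℕ}


private lemma mulVec_dot (A : Matrix (Fin k) (Fin k) ℂ) (c x : Fin k → ℂ) :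
    A.mulVec c ⬝ᵥ x = c ⬝ᵥ Aᵀ.mulVec x := by
  rw [dotProduct_comm, Matrix.dotProduct_mulVec, ← Matrix.mulVec_transpose,
    dotProduct_comm]

private lemma eq_zero_of_mulVec (A : Matrix (Fin k) (Fin k) ℂ) (h : ∀ x, A.mulVec x = 0) :
    A = 0 := by
  ext i j
  have := congrFun (h (Pi.single j 1)) i
  simpa using this

private lemma mem_range_of_dot (A : Matrix (Fin k) (Fin k) ℂ) (y : Fin k → ℂ)
    (h : ∀ x, Aᵀ.mulVec x = 0 → y ⬝ᵥ x = 0) : y ∈ LinearMap.range A.mulVecLin := by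
  classical
  set f := Aᵀ.mulVecLin with hf
  have hφ : ∃ φ : (Fin k → ℂ) →ₗ[ℂ] ℂ, ∀ x, φ x = y ⬝ᵥ x := by
    refine ⟨{ toFun := fun x => y ⬝ᵥ x, map_add' := ?_, map_smul' := ?_ }, fun _ => rfl⟩
    · intro a b; simp [dotProduct_add]
    · intro c a; simp [dotProduct_smul]
  obtain ⟨φ, hφeq⟩ := hφ
  have hker : LinearMap.ker f ≤ LinearMap.ker φ := by
    intro x hx
    rw [LinearMap.mem_ker] at hx ⊢
    rw [hφeq]
    exact h x hx
  -- factor through the quotient and the range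
  let φq := (LinearMap.ker f).liftQ φ hker
  let e := f.quotKerEquivRange
  let ψ0 : LinearMap.range f →ₗ[ℂ] ℂ := φq.comp e.symm.toLinearMap
  obtain ⟨ψ, hψ⟩ := LinearMap.exists_extend ψ0
  have key : ∀ x, ψ (f x) = y ⬝ᵥ x := by
    intro x
    have h1 : e (Submodule.Quotient.mk x) = ⟨f x, LinearMap.mem_range_self f x⟩ :=
      Subtype.ext (f.quotKerEquivRange_apply_mk x)
    have h2 : ψ (f x) = ψ0 ⟨f x, LinearMap.mem_range_self f x⟩ := by
      have := congrFun (congrArg (fun (g : (LinearMap.range f) →ₗ[ℂ] ℂ) => g.toFun) hψ)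
        ⟨f x, LinearMap.mem_range_self f x⟩
      simpa using this
    rw [h2]
    show φq (e.symm ⟨f x, LinearMap.mem_range_self f x⟩) = y ⬝ᵥ x
    rw [← h1, LinearEquiv.symm_apply_apply]
    rw [Submodule.liftQ_apply, hφeq]
  set c : Fin k → ℂ := fun i => ψ (Pi.single i 1) with hc
  have hψdot : ∀ x, ψ x = x ⬝ᵥ c := by
    intro x
    rw [LinearMap.pi_apply_eq_sum_univ ψ x]
    simp only [dotProduct, hc, smul_eq_mul]
    refine Finset.sum_congr rfl fun j _ => ?_
    congr 1
    congr 1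
    funext l
    simp [Pi.single_apply, eq_comm]
  refine ⟨c, ?_⟩
  funext i
  rw [Matrix.mulVecLin_apply]
  have := key (Pi.single i 1)
  rw [hψdot] at this
  rw [hf, Matrix.mulVecLin_apply] at this
  have h3 : (Aᵀ.mulVec (Pi.single i 1)) ⬝ᵥ c = (Pi.single i 1) ⬝ᵥ A.mulVec c := by
    have := mulVec_dot Aᵀ (Pi.single i 1) c
    rw [Matrix.transpose_transpose] at this
    rw [this, dotProduct_comm]
  rw [h3] at this
  simpa [single_dotProduct, dotProduct_single] using this

private lemma range_eq_of_ker_skew (A B : Matrix (Fin k) (Fin k) ℂ)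
    (hA : Aᵀ = -A) (hB : Bᵀ = -B)
    (h : ∀ x, A.mulVec x = 0 ↔ B.mulVec x = 0) :
    LinearMap.range A.mulVecLin = LinearMap.range B.mulVecLin := by
  have h' : ∀ x, Aᵀ.mulVec x = 0 ↔ Bᵀ.mulVec x = 0 := by
    intro x
    rw [hA, hB, Matrix.neg_mulVec, Matrix.neg_mulVec, neg_eq_zero, neg_eq_zero]
    exact h x
  have fwd : ∀ (C D : Matrix (Fin k) (Fin k) ℂ),
      (∀ x, Cᵀ.mulVec x = 0 ↔ Dᵀ.mulVec x = 0) →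
      LinearMap.range C.mulVecLin ≤ LinearMap.range D.mulVecLin := by
    intro C D hCD y hy
    obtain ⟨w, rfl⟩ := hy
    refine mem_range_of_dot D _ (fun x hx => ?_)
    rw [Matrix.mulVecLin_apply, mulVec_dot, (hCD x).mpr hx, dotProduct_zero]
  exact le_antisymm (fwd A B h') (fwd B A (fun x => (h' x).symm))

private lemma pairLemma (M N P Q : Matrix (Fin k) (Fin k) ℂ)
    (hM : Mᵀ = -M) (hN : Nᵀ = -N) (hP : Pᵀ = -P) (hQ : Qᵀ = -Q)
    (hzero : ¬(M = 0 ∧ N = 0 ∧ P = 0 ∧ Q = 0)) :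
    ∃ (x y : Fin k → ℂ) (f0 f1 : ℂ) (b : Fin k → ℂ),
      M.mulVec x + N.mulVec y = f0 • b ∧ P.mulVec x + Q.mulVec y = f1 • b ∧
      (f0 • b ≠ 0 ∨ f1 • b ≠ 0) := by
  classical
  set T0 : ((Fin k → ℂ) × (Fin k → ℂ)) →ₗ[ℂ] (Fin k → ℂ) :=
    (M.mulVecLin).coprod (N.mulVecLin) with hT0def
  set T1 : ((Fin k → ℂ) × (Fin k → ℂ)) →ₗ[ℂ] (Fin k → ℂ) :=
    (P.mulVecLin).coprod (Q.mulVecLin) with hT1def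
  have hT0app : ∀ v : (Fin k → ℂ) × (Fin k → ℂ), T0 v = M.mulVec v.1 + N.mulVec v.2 := by
    intro v; simp [hT0def]
  have hT1app : ∀ v : (Fin k → ℂ) × (Fin k → ℂ), T1 v = P.mulVec v.1 + Q.mulVec v.2 := by
    intro v; simp [hT1def]
  by_cases h1 : ∀ v, T1 v = 0 → T0 v = 0
  · by_cases h0 : ∀ v, T0 v = 0 → T1 v = 0
    · -- equal kernels
      have hker : LinearMap.ker T0 = LinearMap.ker T1 := by
        ext v
        simp only [LinearMap.mem_ker]
        exact ⟨h0 v, h1 v⟩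
      have hMP : ∀ x, M.mulVec x = 0 ↔ P.mulVec x = 0 := by
        intro x
        constructor <;> intro hx
        · have := h0 (x, 0) (by rw [hT0app]; simp [hx])
          rw [hT1app] at this; simpa using this
        · have := h1 (x, 0) (by rw [hT1app]; simp [hx])
          rw [hT0app] at this; simpa using this
      have hNQ : ∀ y, N.mulVec y = 0 ↔ Q.mulVec y = 0 := by
        intro y
        constructor <;> intro hy
        · have := h0 (0, y) (by rw [hT0app]; simp [hy])
          rw [hT1app] at this; simpa using this
        · have := h1 (0, y) (by rw [hT1app]; simp [hy])
          rw [hT0app] at this; simpa using this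
      have hR : LinearMap.range T0 = LinearMap.range T1 := by
        rw [hT0def, hT1def, LinearMap.range_coprod, LinearMap.range_coprod,
          range_eq_of_ker_skew M P hM hP hMP, range_eq_of_ker_skew N Q hN hQ hNQ]
      obtain ⟨v0, hv0⟩ : ∃ v, T1 v ≠ 0 := by
        by_contra hall
        push_neg at hall
        refine hzero ⟨?_, ?_, ?_, ?_⟩
        · refine eq_zero_of_mulVec M (fun x => ?_)
          have := h1 (x, 0) (hall _)
          rw [hT0app] at this; simpa using this
        · refine eq_zero_of_mulVec N (fun y => ?_)
          have := h1 (0, y) (hall _)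
          rw [hT0app] at this; simpa using this
        · refine eq_zero_of_mulVec P (fun x => ?_)
          have := hall (x, 0)
          rw [hT1app] at this; simpa using this
        · refine eq_zero_of_mulVec Q (fun y => ?_)
          have := hall (0, y)
          rw [hT1app] at this; simpa using this
      set K := LinearMap.ker T0 with hK
      have hle1 : K ≤ LinearMap.ker T1 := hker.le
      set Tb0 := K.liftQ T0 le_rfl with hTb0
      set Tb1 := K.liftQ T1 hle1 with hTb1
      have hinj1 : LinearMap.ker Tb1 = ⊥ := Submodule.ker_liftQ_eq_bot _ _ _ hker.ge
      set U := LinearMap.range Tb1 with hU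
      have hU0 : LinearMap.range Tb0 = U := by
        rw [hTb0, hU, hTb1, Submodule.range_liftQ, Submodule.range_liftQ, hR]
      let e : (((Fin k → ℂ) × (Fin k → ℂ)) ⧸ K) ≃ₗ[ℂ] U :=
        LinearEquiv.ofInjective Tb1 (LinearMap.ker_eq_bot.mp hinj1)
      let g : (((Fin k → ℂ) × (Fin k → ℂ)) ⧸ K) →ₗ[ℂ] U :=
        Tb0.codRestrict U (fun w => hU0 ▸ LinearMap.mem_range_self Tb0 w)
      let φ : Module.End ℂ U := g.comp e.symm.toLinearMap
      haveI : Nontrivial U := by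
        refine Submodule.nontrivial_iff_ne_bot.mpr (fun hbot => ?_)
        have : T1 v0 ∈ U := ⟨K.mkQ v0, by rw [hTb1]; rfl⟩
        rw [hbot, Submodule.mem_bot] at this
        exact hv0 this
      obtain ⟨μ, hμ⟩ := Module.End.exists_eigenvalue φ
      obtain ⟨u, hu⟩ := hμ.exists_hasEigenvector
      set w := e.symm u with hw
      have hT1w : Tb1 w = (u : Fin k → ℂ) := by
        have h1' : (e w : Fin k → ℂ) = Tb1 w := rfl
        rw [hw] at h1' ⊢
        rw [← h1', LinearEquiv.apply_symm_apply]
      have hT0w : Tb0 w = μ • (u : Fin k → ℂ) := by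
        have h2' : (g w : Fin k → ℂ) = Tb0 w := rfl
        have h3' : φ u = g w := rfl
        have := hu.apply_eq_smul
        rw [h3'] at this
        have := congrArg (Subtype.val) this
        rw [h2'] at this
        simpa using this
      obtain ⟨v, hv⟩ := Submodule.mkQ_surjective K w
      have hT0v : T0 v = μ • (u : Fin k → ℂ) := by
        rw [← hT0w, ← hv]; rfl
      have hT1v : T1 v = (u : Fin k → ℂ) := by
        rw [← hT1w, ← hv]; rfl
      have hune : (u : Fin k → ℂ) ≠ 0 := fun hzz => hu.right (Subtype.ext hzz)
      refine ⟨v.1, v.2, μ, 1, T1 v, ?_, ?_, Or.inr ?_⟩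
      · rw [← hT0app, hT0v, hT1v]
      · rw [← hT1app, one_smul]
      · rw [one_smul, hT1v]; exact hune
    · push_neg at h0
      obtain ⟨v, hv0, hv1⟩ := h0
      refine ⟨v.1, v.2, 0, 1, T1 v, ?_, ?_, Or.inr ?_⟩
      · rw [← hT0app, hv0, zero_smul]
      · rw [← hT1app, one_smul]
      · rw [one_smul]; exact hv1
  · push_neg at h1
    obtain ⟨v, hv1, hv0⟩ := h1
    refine ⟨v.1, v.2, 1, 0, T0 v, ?_, ?_, Or.inl ?_⟩
    · rw [← hT0app, one_smul]
    · rw [← hT1app, hv1, zero_smul]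
    · rw [one_smul]; exact hv0

end Aux


/-- Let `σ̂` be a nonzero co-admissible family with `σ̂^{ij} = 0` whenever
both `i ≥ 3` and `j ≥ 3` (1-indexed; i.e. `2 ≤ i` and `2 ≤ j` below).  Then there exist
columns `B¹, …, B⁴ ∈ ℂ^k`, a vector `f ∈ ℂ⁴` and `b ∈ ℂ^k` with
`Σ_j σ̂^{ij} B^j = f_i b` for every `i`, and `f_i b ≠ 0` for some `i`. -/
theorem stmt4 (k : ℕ) (hk : 2 ≤ k) (σh : Fin 4 → Fin 4 → Matrix (Fin k) (Fin k) ℂ)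
    (hσ : CoAdmissible k σh) (hne : ¬ ∀ i j, σh i j = 0)
    (hvan : ∀ i j : Fin 4, 2 ≤ (i : ℕ) → 2 ≤ (j : ℕ) → σh i j = 0) :
    ∃ (B : Fin 4 → Fin k → ℂ) (f : Fin 4 → ℂ) (b : Fin k → ℂ),
      (∀ i, ∑ j, (σh i j).mulVec (B j) = f i • b) ∧ ∃ i, f i • b ≠ 0 := by
  obtain ⟨hskew, hsym⟩ := hσ
  have h22 : σh 2 2 = 0 := hvan 2 2 (by decide) (by decide)
  have h23 : σh 2 3 = 0 := hvan 2 3 (by decide) (by decide)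
  have h32 : σh 3 2 = 0 := hvan 3 2 (by decide) (by decide)
  have h33 : σh 3 3 = 0 := hvan 3 3 (by decide) (by decide)
  by_cases hc : σh 0 2 = 0 ∧ σh 0 3 = 0 ∧ σh 1 2 = 0 ∧ σh 1 3 = 0
  · -- all mixed blocks vanish: use the {0,1} block
    obtain ⟨hc02, hc03, hc12, hc13⟩ := hc
    have h20 : σh 2 0 = 0 := (hsym 2 0).trans hc02
    have h30 : σh 3 0 = 0 := (hsym 3 0).trans hc03
    have h21 : σh 2 1 = 0 := (hsym 2 1).trans hc12
    have h31 : σh 3 1 = 0 := (hsym 3 1).trans hc13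
    have hzero : ¬(σh 0 0 = 0 ∧ σh 0 1 = 0 ∧ σh 0 1 = 0 ∧ σh 1 1 = 0) := by
      rintro ⟨hA, hC, -, hD⟩
      have h10 : σh 1 0 = 0 := (hsym 1 0).trans hC
      refine hne (fun i j => ?_)
      fin_cases i <;> fin_cases j <;> assumption
    obtain ⟨x, y, f0, f1, b, hr0, hr1, hnz⟩ :=
      pairLemma (σh 0 0) (σh 0 1) (σh 0 1) (σh 1 1)
        (hskew 0 0) (hskew 0 1) (hskew 0 1) (hskew 1 1) hzero
    refine ⟨![x, y, 0, 0], ![f0, f1, 0, 0], b, ?_, ?_⟩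
    · intro i
      have key : ∀ i' : Fin 4, ∑ j, (σh i' j).mulVec (![x, y, 0, 0] j) =
          (![f0, f1, 0, 0] i') • b := by
        intro i'
        fin_cases i'
        · show ∑ j, (σh 0 j).mulVec (![x, y, 0, 0] j) = f0 • b
          rw [Fin.sum_univ_four]
          simpa [Matrix.mulVec_zero] using hr0
        · show ∑ j, (σh 1 j).mulVec (![x, y, 0, 0] j) = f1 • b
          rw [Fin.sum_univ_four]
          rw [show σh 1 0 = σh 0 1 from hsym 1 0]
          simpa [Matrix.mulVec_zero] using hr1
        · show ∑ j, (σh 2 j).mulVec (![x, y, 0, 0] j) = (0 : ℂ) • b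
          rw [Fin.sum_univ_four]
          simp [h20, h21, Matrix.zero_mulVec, Matrix.mulVec_zero]
        · show ∑ j, (σh 3 j).mulVec (![x, y, 0, 0] j) = (0 : ℂ) • b
          rw [Fin.sum_univ_four]
          simp [h30, h31, Matrix.zero_mulVec, Matrix.mulVec_zero]
      exact key i
    · rcases hnz with h | h
      · exact ⟨0, by simpa using h⟩
      · exact ⟨1, by simpa using h⟩
  · -- some mixed block is nonzero
    have hzero : ¬(σh 0 2 = 0 ∧ σh 0 3 = 0 ∧ σh 1 2 = 0 ∧ σh 1 3 = 0) := hc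
    obtain ⟨x, y, f0, f1, b, hr0, hr1, hnz⟩ :=
      pairLemma (σh 0 2) (σh 0 3) (σh 1 2) (σh 1 3)
        (hskew 0 2) (hskew 0 3) (hskew 1 2) (hskew 1 3) hzero
    refine ⟨![0, 0, x, y], ![f0, f1, 0, 0], b, ?_, ?_⟩
    · intro i
      have key : ∀ i' : Fin 4, ∑ j, (σh i' j).mulVec (![0, 0, x, y] j) =
          (![f0, f1, 0, 0] i') • b := by
        intro i'
        fin_cases i'
        · show ∑ j, (σh 0 j).mulVec (![0, 0, x, y] j) = f0 • b
          rw [Fin.sum_univ_four]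
          simpa [Matrix.mulVec_zero] using hr0
        · show ∑ j, (σh 1 j).mulVec (![0, 0, x, y] j) = f1 • b
          rw [Fin.sum_univ_four]
          simpa [Matrix.mulVec_zero] using hr1
        · show ∑ j, (σh 2 j).mulVec (![0, 0, x, y] j) = (0 : ℂ) • b
          rw [Fin.sum_univ_four]
          simp [h22, h23, Matrix.zero_mulVec, Matrix.mulVec_zero]
        · show ∑ j, (σh 3 j).mulVec (![0, 0, x, y] j) = (0 : ℂ) • b
          rw [Fin.sum_univ_four]
          simp [h32, h33, Matrix.zero_mulVec, Matrix.mulVec_zero]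
      exact key i
    · rcases hnz with h | h
      · exact ⟨0, by simpa using h⟩
      · exact ⟨1, by simpa using h⟩
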